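/- Let $k \ge 2$ and let $G_1, \dots, G_r$ be linearly independent homogeneous polynomials of degree $k$ in $\mathbb{F}_q[x_0,\dots,x_m]$ such that $\deg \gcd(G_i, G_j) = k-1$ for all $i \ne j$ and $\gcd(G_1, \dots, G_r) = 1$. Then no $G_i$ has an irreducible factor of degree $\ge 2$, and no $G_i$ is divisible by the square of a linear form; consequently each $G_i$ is a product of $k$ pairwise non-proportional homogeneous linear polynomials. -/

import Mathlib

open MvPolynomial

namespace CloseFamilyAux

variable {σ : Type*} {R : Type*} [CommRing R]

noncomputable def psi : MvPolynomial σ R →+* Polynomial (MvPolynomial σ R) :=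
  eval₂Hom (Polynomial.C.comp C) fun i => Polynomial.C (X i) * Polynomial.X

lemma psi_coeff (p : MvPolynomial σ R) (d : ℕ) :
    (psi p).coeff d = homogeneousComponent d p := by
  induction p using MvPolynomial.induction_on' with
  | add p q hp hq => simp [map_add, hp, hq]
  | monomial u c =>
      have hprod : u.prod (fun i e => (Polynomial.C (X i : MvPolynomial σ R) * Polynomial.X) ^ e)
          = Polynomial.C (u.prod fun i e => (X i : MvPolynomial σ R) ^ e)
              * Polynomial.X ^ (u.degree) := by
        rw [Finsupp.prod, Finsupp.prod, Finsupp.degree]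
        simp only [mul_pow, ← Polynomial.C_pow]
        rw [Finset.prod_mul_distrib, ← map_prod, Finset.prod_pow_eq_pow_sum]
        rfl
      have hmem : (monomial u c : MvPolynomial σ R) ∈ homogeneousSubmodule σ R u.degree :=
        (mem_homogeneousSubmodule _ _).mpr (isHomogeneous_monomial c rfl)
      rw [homogeneousComponent_of_mem hmem]
      show (eval₂ (Polynomial.C.comp C) (fun i => Polynomial.C (X i) * Polynomial.X)
        (monomial u c)).coeff d = _
      rw [eval₂_monomial, hprod]
      rw [monomial_eq]
      simp only [RingHom.comp_apply, ← mul_assoc, ← map_mul]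
      rw [Polynomial.coeff_C_mul, Polynomial.coeff_X_pow]
      by_cases h : d = u.degree
      · simp [h]
      · simp [h, Ne.symm h]

end CloseFamilyAux

namespace CloseFamilyAux

variable {σ : Type*} {R : Type*} [CommRing R]

lemma homogeneousComponent_eq_zero_of_ne {p : MvPolynomial σ R} {n : ℕ}
    (hp : p.IsHomogeneous n) {d : ℕ} (hd : d ≠ n) : homogeneousComponent d p = 0 := by
  rw [homogeneousComponent_of_mem ((mem_homogeneousSubmodule _ _).mpr hp), if_neg hd]

lemma isHomogeneous_of_forall {p : MvPolynomial σ R} {n : ℕ}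
    (h : ∀ d, d ≠ n → homogeneousComponent d p = 0) : p.IsHomogeneous n := by
  have hs := sum_homogeneousComponent p
  rw [← hs]
  apply IsHomogeneous.sum
  intro i _
  by_cases hi : i = n
  · subst hi; exact homogeneousComponent_isHomogeneous i p
  · rw [h i hi]; exact isHomogeneous_zero _ _ _

lemma psi_ne_zero {p : MvPolynomial σ R} (hp : p ≠ 0) : psi p ≠ 0 := by
  intro h
  apply hp
  rw [← sum_homogeneousComponent p]
  apply Finset.sum_eq_zero
  intro i _
  rw [← psi_coeff, h, Polynomial.coeff_zero]

lemma exists_homog_of_mul [IsDomain R] {a b : MvPolynomial σ R} {n : ℕ}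
    (ha : a ≠ 0) (hb : b ≠ 0) (h : (a * b).IsHomogeneous n) :
    ∃ na nb, na + nb = n ∧ a.IsHomogeneous na ∧ b.IsHomogeneous nb := by
  have hab : a * b ≠ 0 := mul_ne_zero ha hb
  have hfa : psi a ≠ 0 := psi_ne_zero ha
  have hfb : psi b ≠ 0 := psi_ne_zero hb
  have hcoeff : ∀ d, d ≠ n → (psi a * psi b).coeff d = 0 := by
    intro d hd
    rw [← map_mul, psi_coeff]
    exact homogeneousComponent_eq_zero_of_ne h hd
  have hcn : (psi a * psi b).coeff n ≠ 0 := by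
    intro h0
    apply psi_ne_zero hab
    rw [map_mul]
    apply Polynomial.ext
    intro d
    rw [Polynomial.coeff_zero]
    by_cases hd : d = n
    · subst hd; exact h0
    · exact hcoeff d hd
  have hdeg_le : (psi a * psi b).natDegree ≤ n :=
    Polynomial.natDegree_le_iff_coeff_eq_zero.mpr fun N hN => hcoeff N (by omega)
  have hdeg_ge : n ≤ (psi a * psi b).natDegree := Polynomial.le_natDegree_of_ne_zero hcn
  have htr_ge : n ≤ (psi a * psi b).natTrailingDegree :=
    Polynomial.le_natTrailingDegree (mul_ne_zero hfa hfb) fun m hm => hcoeff m (by omega)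
  have htr_le : (psi a * psi b).natTrailingDegree ≤ n :=
    Polynomial.natTrailingDegree_le_of_ne_zero hcn
  rw [Polynomial.natDegree_mul hfa hfb] at hdeg_le hdeg_ge
  rw [Polynomial.natTrailingDegree_mul hfa hfb] at htr_ge htr_le
  have hta := Polynomial.natTrailingDegree_le_natDegree (psi a)
  have htb := Polynomial.natTrailingDegree_le_natDegree (psi b)
  have ea : (psi a).natTrailingDegree = (psi a).natDegree := by omega
  have eb : (psi b).natTrailingDegree = (psi b).natDegree := by omega
  refine ⟨(psi a).natDegree, (psi b).natDegree, by omega, ?_, ?_⟩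
  · apply isHomogeneous_of_forall
    intro d hd
    rw [← psi_coeff]
    rcases lt_or_gt_of_ne hd with h' | h'
    · exact Polynomial.coeff_eq_zero_of_lt_natTrailingDegree (by omega)
    · exact Polynomial.coeff_eq_zero_of_natDegree_lt h'
  · apply isHomogeneous_of_forall
    intro d hd
    rw [← psi_coeff]
    rcases lt_or_gt_of_ne hd with h' | h'
    · exact Polynomial.coeff_eq_zero_of_lt_natTrailingDegree (by omega)
    · exact Polynomial.coeff_eq_zero_of_natDegree_lt h'

lemma eq_C_of_totalDegree_zero {p : MvPolynomial σ R} (h : p.totalDegree = 0) :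
    p = C (coeff 0 p) := by
  classical
  have h' := (totalDegree_eq_zero_iff σ p).mp h
  ext d
  rw [coeff_C]
  by_cases hd : 0 = d
  · rw [if_pos hd, ← hd]
  · rw [if_neg hd]
    by_contra hc
    have hmem : d ∈ p.support := by rwa [mem_support_iff]
    apply hd
    ext x
    simp [h' d hmem x]

lemma isUnit_of_homog_zero {K : Type*} [Field K] {p : MvPolynomial σ K}
    (hp : p.IsHomogeneous 0) (h0 : p ≠ 0) : IsUnit p := by
  have ht : p.totalDegree = 0 := hp.totalDegree h0
  have hC := eq_C_of_totalDegree_zero ht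
  have hc : coeff 0 p ≠ 0 := by
    intro h; apply h0; rw [hC, h, map_zero]
  rw [hC]
  exact (isUnit_iff_ne_zero.mpr hc).map C

lemma exists_C_of_isUnit {K : Type*} [Field K] {p : MvPolynomial σ K}
    (h : IsUnit p) : ∃ c : K, c ≠ 0 ∧ p = C c := by
  obtain ⟨u, rfl⟩ := h
  have h1 : ((u : MvPolynomial σ K) * (↑u⁻¹ : MvPolynomial σ K)).IsHomogeneous 0 := by
    rw [u.mul_inv]; exact isHomogeneous_one σ K
  have hu0 : (u : MvPolynomial σ K) ≠ 0 := u.ne_zero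
  have hv0 : (↑u⁻¹ : MvPolynomial σ K) ≠ 0 := u⁻¹.ne_zero
  obtain ⟨na, nb, hsum, hua, _⟩ := exists_homog_of_mul hu0 hv0 h1
  have hna : na = 0 := by omega
  subst hna
  have ht : (u : MvPolynomial σ K).totalDegree = 0 := hua.totalDegree hu0
  refine ⟨coeff 0 (u : MvPolynomial σ K), ?_, eq_C_of_totalDegree_zero ht⟩
  intro h
  apply hu0
  rw [eq_C_of_totalDegree_zero ht, h, map_zero]

lemma irreducible_of_homog_one {K : Type*} [Field K] {p : MvPolynomial σ K}
    (hp : p.IsHomogeneous 1) (h0 : p ≠ 0) : Irreducible p := by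
  constructor
  · intro hu
    obtain ⟨c, _, hc⟩ := exists_C_of_isUnit hu
    have : (0 : ℕ) = 1 := by
      apply IsHomogeneous.inj_right _ hp h0
      rw [hc]; exact isHomogeneous_C _ _
    omega
  · intro a b hab
    have ha : a ≠ 0 := by rintro rfl; rw [zero_mul] at hab; exact h0 hab
    have hb : b ≠ 0 := by rintro rfl; rw [mul_zero] at hab; exact h0 hab
    obtain ⟨na, nb, hsum, hha, hhb⟩ := exists_homog_of_mul ha hb (hab ▸ hp)
    rcases Nat.eq_zero_or_pos na with h | h
    · left; exact isUnit_of_homog_zero (h ▸ hha) ha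
    · right
      have : nb = 0 := by omega
      exact isUnit_of_homog_zero (this ▸ hhb) hb

lemma multiset_prod_homog (f : Multiset (MvPolynomial σ R))
    (h : ∀ Q ∈ f, Q.IsHomogeneous 1) : f.prod.IsHomogeneous (Multiset.card f) := by
  induction f using Multiset.induction with
  | empty => simpa using isHomogeneous_one σ R
  | cons a s ih =>
      rw [Multiset.prod_cons, Multiset.card_cons, add_comm]
      exact ((h a (Multiset.mem_cons_self a s)).mul
        (ih fun Q hQ => h Q (Multiset.mem_cons_of_mem hQ)))

end CloseFamilyAux

open MvPolynomial CloseFamilyAux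

/-- Let `k ≥ 2` and `G₁,…,G_r` be linearly independent homogeneous polynomials of
degree `k` in `F_q[x₀,…,x_m]` such that any two have a gcd of degree `k-1` and all of
them are coprime. Then no `Gᵢ` has an irreducible factor of degree `≥ 2`, no `Gᵢ` is
divisible by the square of a linear form, and consequently each `Gᵢ` is a product of
`k` pairwise non-proportional homogeneous linear polynomials. -/
theorem coprime_close_family_factors (q k m r : ℕ) {K : Type} [Field K] [Fintype K]
    (hq : Fintype.card K = q) (hk : 2 ≤ k) (hr : 1 ≤ r)
    (G : Fin r → MvPolynomial (Fin (m + 1)) K)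
    (hli : LinearIndependent K G) (hhom : ∀ i, (G i).IsHomogeneous k)
    (hgcd : ∀ i j, i ≠ j → ∃ D : MvPolynomial (Fin (m + 1)) K,
      D.IsHomogeneous (k - 1) ∧ D ∣ G i ∧ D ∣ G j ∧
      ∀ E : MvPolynomial (Fin (m + 1)) K, E ∣ G i → E ∣ G j → E ∣ D)
    (hcop : ∀ E : MvPolynomial (Fin (m + 1)) K, (∀ i, E ∣ G i) → IsUnit E) :
    (∀ i, ∀ Q : MvPolynomial (Fin (m + 1)) K, Irreducible Q → Q ∣ G i →
      Q.totalDegree ≤ 1) ∧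
    (∀ i, ∀ H : MvPolynomial (Fin (m + 1)) K, H.IsHomogeneous 1 → H ≠ 0 →
      ¬ (H ^ 2 ∣ G i)) ∧
    (∀ i, ∃ H : Fin k → MvPolynomial (Fin (m + 1)) K,
      (∀ t, (H t).IsHomogeneous 1 ∧ H t ≠ 0) ∧
      (∀ s t, s ≠ t → ∀ c : K, H s ≠ C c * H t) ∧
      G i = ∏ t, H t) := by
  classical
  have hG0 : ∀ i, G i ≠ 0 := fun i => hli.ne_zero i
  -- key degree fact about the gcd factorization
  have keyL : ∀ i j, i ≠ j → ∃ D L : MvPolynomial (Fin (m + 1)) K,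
      G i = D * L ∧ D ∣ G j ∧ D ≠ 0 ∧ L ≠ 0 ∧ D.IsHomogeneous (k-1) ∧ L.IsHomogeneous 1 := by
    intro i j hij
    obtain ⟨D, hD, hDi, hDj, -⟩ := hgcd i j hij
    obtain ⟨L, hL⟩ := hDi
    have hDne : D ≠ 0 := by rintro rfl; apply hG0 i; rw [hL, zero_mul]
    have hLne : L ≠ 0 := by rintro rfl; apply hG0 i; rw [hL, mul_zero]
    obtain ⟨nD, nL, hsum, hhD, hhL⟩ := exists_homog_of_mul hDne hLne (by rw [← hL]; exact hhom i)
    have hnD : nD = k - 1 := hhD.inj_right hD hDne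
    have hnL : nL = 1 := by omega
    subst hnL
    exact ⟨D, L, hL, hDj, hDne, hLne, hD, hhL⟩
  have part1 : ∀ i, ∀ Q : MvPolynomial (Fin (m + 1)) K, Irreducible Q → Q ∣ G i →
      Q.totalDegree ≤ 1 := by
    intro i Q hQ hdvd
    by_contra hgt
    push_neg at hgt
    have hQprime : Prime Q := (UniqueFactorizationMonoid.irreducible_iff_prime).mp hQ
    have hQall : ∀ j, Q ∣ G j := by
      intro j
      by_cases hij : j = i
      · exact hij ▸ hdvd
      · obtain ⟨D, L, hL, hDj, hDne, hLne, hD, hL1⟩ := keyL i j (fun h => hij h.symm)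
        have hQDL : Q ∣ D * L := hL ▸ hdvd
        rcases hQprime.2.2 _ _ hQDL with h | h
        · exact h.trans hDj
        · exfalso
          obtain ⟨M, hM⟩ := h
          have hQne : Q ≠ 0 := hQ.ne_zero
          have hMne : M ≠ 0 := by rintro rfl; rw [mul_zero] at hM; exact hLne hM
          obtain ⟨nQ, nM, hsum', hhQ, -⟩ :=
            exists_homog_of_mul hQne hMne (by rw [← hM]; exact hL1)
          have := hhQ.totalDegree hQne
          omega
    exact hQ.not_isUnit (hcop Q hQall)
  have part2 : ∀ i, ∀ H : MvPolynomial (Fin (m + 1)) K, H.IsHomogeneous 1 → H ≠ 0 →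
      ¬ (H ^ 2 ∣ G i) := by
    intro i H hH hHne hsq
    have hirr : Irreducible H := irreducible_of_homog_one hH hHne
    have hprime : Prime H := (UniqueFactorizationMonoid.irreducible_iff_prime).mp hirr
    have hdvd : H ∣ G i := (dvd_pow_self H two_ne_zero).trans hsq
    have hall : ∀ j, H ∣ G j := by
      intro j
      by_cases hij : j = i
      · exact hij ▸ hdvd
      · obtain ⟨D, L, hL, hDj, hDne, hLne, hD, hL1⟩ := keyL i j (fun h => hij h.symm)
        refine Dvd.dvd.trans (?_ : H ∣ D) hDj
        have h2 : H ^ 2 ∣ D * L := hL ▸ hsq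
        have h1 : H ∣ D * L := (dvd_pow_self H two_ne_zero).trans h2
        rcases hprime.2.2 _ _ h1 with h | h
        · exact h
        · obtain ⟨M, hM⟩ := h
          have hHne0 : H ≠ 0 := hHne
          have hMne : M ≠ 0 := by rintro rfl; rw [mul_zero] at hM; exact hLne hM
          obtain ⟨nH, nM, hsum', hhH, hhM⟩ :=
            exists_homog_of_mul hHne0 hMne (by rw [← hM]; exact hL1)
          have hnH : nH = 1 := hhH.inj_right hH hHne0
          have hnM : nM = 0 := by omega
          have hMunit : IsUnit M := isUnit_of_homog_zero (by rw [← hnM]; exact hhM) hMne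
          have heq : D * L = H * (D * M) := by rw [hM]; ring
          have h3 : H * H ∣ H * (D * M) := by rw [← pow_two, ← heq]; exact h2
          have h4 : H ∣ D * M := (mul_dvd_mul_iff_left hHne0).mp h3
          rcases hprime.2.2 _ _ h4 with h' | h'
          · exact h'
          · exact absurd (isUnit_of_dvd_unit h' hMunit) hirr.not_isUnit
    exact hirr.not_isUnit (hcop H hall)
  refine ⟨part1, part2, ?_⟩
  intro i
  haveI : NeZero k := ⟨by omega⟩
  obtain ⟨u, hu⟩ := UniqueFactorizationMonoid.factors_prod (hG0 i)
  set f := UniqueFactorizationMonoid.factors (G i) with hf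
  have hirrf : ∀ Q ∈ f, Irreducible Q :=
    fun Q hQ => UniqueFactorizationMonoid.irreducible_of_factor Q hQ
  have hfdvd : f.prod ∣ G i := ⟨u, hu.symm⟩
  have hQ1 : ∀ Q ∈ f, Q.IsHomogeneous 1 := by
    intro Q hQf
    have hQ := hirrf Q hQf
    have hdvd : Q ∣ G i := (Multiset.dvd_prod hQf).trans hfdvd
    obtain ⟨M, hM⟩ := id hdvd
    have hMne : M ≠ 0 := by rintro rfl; rw [mul_zero] at hM; exact hG0 i hM
    obtain ⟨nQ, nM, hsum, hhQ, -⟩ :=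
      exists_homog_of_mul hQ.ne_zero hMne (by rw [← hM]; exact hhom i)
    have hle := part1 i Q hQ hdvd
    have ht := hhQ.totalDegree hQ.ne_zero
    have hn0 : nQ ≠ 0 := by
      intro h
      exact hQ.not_isUnit (isUnit_of_homog_zero (by rw [← h]; exact hhQ) hQ.ne_zero)
    have hnQ : nQ = 1 := by omega
    subst hnQ
    exact hhQ
  obtain ⟨c, hc0, hcC⟩ := exists_C_of_isUnit u.isUnit
  have hcard : Multiset.card f = k := by
    have hp := multiset_prod_homog f hQ1
    have hhomGi : (G i).IsHomogeneous (Multiset.card f) := by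
      rw [← hu, hcC, mul_comm]
      exact hp.C_mul c
    exact hhomGi.inj_right (hhom i) (hG0 i)
  set l := f.toList with hl
  have hlen : l.length = k := by rw [hl, Multiset.length_toList, hcard]
  set P : Fin k → MvPolynomial (Fin (m + 1)) K :=
    fun t => l.get (Fin.cast hlen.symm t) with hP
  have hPmem : ∀ t, P t ∈ f := fun t => by
    rw [← Multiset.mem_toList]
    exact List.get_mem l _
  have hPprod : ∏ t, P t = f.prod := by
    rw [← Multiset.prod_toList]
    conv_rhs => rw [← hl, ← List.ofFn_get l]
    rw [List.prod_ofFn]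
    exact Fin.prod_congr' _ hlen.symm
  set H : Fin k → MvPolynomial (Fin (m + 1)) K :=
    fun t => (if t = 0 then C c else 1) * P t with hHdef
  have key1 : ∀ t, (H t).IsHomogeneous 1 ∧ H t ≠ 0 := by
    intro t
    have h1 := hQ1 _ (hPmem t)
    have h0 : P t ≠ 0 := (hirrf _ (hPmem t)).ne_zero
    by_cases ht : t = 0
    · have : H t = C c * P t := by rw [hHdef]; simp [ht]
      rw [this]
      exact ⟨h1.C_mul c, mul_ne_zero (fun h => hc0 (by simpa using h)) h0⟩
    · have : H t = P t := by rw [hHdef]; simp [ht]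
      rw [this]
      exact ⟨h1, h0⟩
  have key3 : G i = ∏ t, H t := by
    have hsplit : ∏ t, H t = (∏ t, if t = (0 : Fin k) then C c else 1) * ∏ t, P t := by
      rw [hHdef, ← Finset.prod_mul_distrib]
    rw [hsplit, Finset.prod_ite_eq' Finset.univ (0 : Fin k) (fun _ => C c),
      if_pos (Finset.mem_univ _), hPprod, ← hu, hcC, mul_comm]
  have key2 : ∀ s t, s ≠ t → ∀ c' : K, H s ≠ C c' * H t := by
    intro s t hst c' heq
    have hs := key1 s
    have ht' := key1 t
    have hc' : c' ≠ 0 := by rintro rfl; rw [map_zero, zero_mul] at heq; exact hs.2 heq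
    have hdvd2 : H s * H t ∣ ∏ x, H x := by
      have hsub : ({s, t} : Finset (Fin k)) ⊆ Finset.univ := Finset.subset_univ _
      have hd := Finset.prod_dvd_prod_of_subset _ _ H hsub
      rwa [Finset.prod_pair hst] at hd
    rw [← key3] at hdvd2
    have hsq : (H t) ^ 2 ∣ G i := by
      have heq2 : H s * H t = C c' * (H t) ^ 2 := by rw [heq]; ring
      refine Dvd.dvd.trans ?_ (heq2 ▸ hdvd2)
      exact dvd_mul_left _ _
    exact part2 i (H t) ht'.1 ht'.2 hsq
  exact ⟨H, key1, key2, key3⟩
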